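/- Let r ≥ d, let W be a d×r complex matrix whose columns are generic (any d of the r columns of W are linearly independent), and let M_1, ..., M_n be d×d complex matrices such that Δ(W* M_l* M_k W) = 0 for all k ≠ l. Then ∑_{k=1}^n rank(M_k) ≤ d². -/

import Mathlib

open Matrix

set_option maxHeartbeats 800000

lemma aux_orth_card {ι : Type*} [Fintype ι] {d : ℕ}
    (v : ι → (Fin d → ℂ)) (hnz : ∀ i, v i ≠ 0)
    (ho : ∀ i j, i ≠ j → ∑ x, (starRingEnd ℂ) (v i x) * v j x = 0) :
    Fintype.card ι ≤ d := by
  let u : ι → EuclideanSpace ℂ (Fin d) := fun i => WithLp.toLp 2 (v i)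
  have hinner : ∀ i j, inner ℂ (u i) (u j) = ∑ x, (starRingEnd ℂ) (v i x) * v j x := by
    intro i j
    simp [PiLp.inner_apply, RCLike.inner_apply, u, mul_comm]
  have hli : LinearIndependent ℂ u := by
    rw [Fintype.linearIndependent_iff]
    intro g hg i
    have h0 : inner ℂ (u i) (∑ j, g j • u j) = (0 : ℂ) := by rw [hg, inner_zero_right]
    rw [inner_sum] at h0
    simp only [inner_smul_right] at h0
    rw [Finset.sum_eq_single i] at h0
    · rcases mul_eq_zero.1 h0 with h | h
      · exact h
      · exact absurd (inner_self_eq_zero.mp h) (by simpa [u] using hnz i)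
    · intro j _ hj
      rw [hinner i j, ho i j (Ne.symm hj), mul_zero]
    · simp
  simpa [finrank_euclideanSpace_fin] using hli.fintype_card_le_finrank

lemma aux_ker {d r : ℕ} (hrd : d ≤ r) (w : Fin r → (Fin d → ℂ))
    (hgen : ∀ s : Finset (Fin r), s.card = d →
      LinearIndependent ℂ (fun j : s => w j))
    (M : Matrix (Fin d) (Fin d) ℂ) (hM : M ≠ 0)
    (S : Finset (Fin r)) (hS : ∀ j ∈ S, M *ᵥ w j = 0) :
    S.card ≤ d - M.rank := by
  have hli : ∀ T : Finset (Fin r), T.card ≤ d → LinearIndependent ℂ (fun j : T => w j) := by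
    intro T hT
    obtain ⟨U, hTU, hU⟩ := Finset.exists_superset_card_eq hT (by simpa using hrd)
    exact (hgen U hU).comp (fun j => ⟨j.1, hTU j.2⟩)
      (fun a b hab => Subtype.ext (by injection hab))
  have hrn : M.rank + Module.finrank ℂ ↥(LinearMap.ker M.mulVecLin) = d := by
    have := LinearMap.finrank_range_add_finrank_ker M.mulVecLin
    simpa [Matrix.rank] using this
  have key : ∀ T : Finset (Fin r), T.card ≤ d → (∀ j ∈ T, M *ᵥ w j = 0) →
      T.card ≤ Module.finrank ℂ ↥(LinearMap.ker M.mulVecLin) := by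
    intro T hTd hTker
    have hli' := hli T hTd
    have hspan : Submodule.span ℂ (Set.range (fun j : T => w j)) ≤ LinearMap.ker M.mulVecLin := by
      rw [Submodule.span_le]
      rintro _ ⟨j, rfl⟩
      simpa [LinearMap.mem_ker, Matrix.mulVecLin_apply] using hTker j j.2
    calc T.card = Module.finrank ℂ ↥(Submodule.span ℂ (Set.range fun j : T => w j)) := by
          rw [finrank_span_eq_card hli', Fintype.card_coe]
      _ ≤ _ := Submodule.finrank_mono hspan
  rcases le_or_gt S.card d with h | h
  · have := key S h hS
    omega
  · exfalso
    obtain ⟨T, hTS, hT⟩ := Finset.exists_subset_card_eq h.le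
    have := key T hT.le (fun j hj => hS j (hTS hj))
    rw [hT] at this
    have hr0 : M.rank = 0 := by omega
    unfold Matrix.rank at hr0
    have hbot : LinearMap.range M.mulVecLin = ⊥ := Submodule.finrank_eq_zero.mp hr0
    have hML : M.mulVecLin = 0 := LinearMap.range_eq_bot.mp hbot
    apply hM
    apply Matrix.toLin'.injective
    rw [Matrix.toLin'_apply', Matrix.toLin'_apply', hML, Matrix.mulVecLin_zero]

/-- The diagonal truncation map Δ: zeros out off-diagonal entries. -/
def delta {n : Type*} [DecidableEq n] (M : Matrix n n ℂ) : Matrix n n ℂ :=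
  Matrix.diagonal (fun i => M i i)

theorem stmt16 (d r n : ℕ) (hrd : d ≤ r) (W : Matrix (Fin d) (Fin r) ℂ)
    (hgen : ∀ s : Finset (Fin r), s.card = d →
      LinearIndependent ℂ (fun j : s => (fun i => W i (j : Fin r)) : s → Fin d → ℂ))
    (M : Fin n → Matrix (Fin d) (Fin d) ℂ)
    (horth : ∀ (k l : Fin n), k ≠ l → delta (Wᴴ * (M l)ᴴ * M k * W) = 0) :
    ∑ k, (M k).rank ≤ d ^ 2 := by
  classical
  set w : Fin r → (Fin d → ℂ) := fun j i => W i j with hw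
  have horth' : ∀ (j : Fin r) (k l : Fin n), k ≠ l →
      ∑ x, (starRingEnd ℂ) ((M l *ᵥ w j) x) * ((M k *ᵥ w j) x) = 0 := by
    intro j k l hkl
    have h := congrFun (congrFun (horth k l hkl) j) j
    have hEq : Wᴴ * (M l)ᴴ * M k * W = (M l * W)ᴴ * (M k * W) := by
      rw [conjTranspose_mul, Matrix.mul_assoc]
    rw [hEq] at h
    simp only [delta, Matrix.diagonal_apply_eq, Matrix.zero_apply] at h
    rw [← h]
    simp [Matrix.mul_apply, Matrix.mulVec, dotProduct, Matrix.conjTranspose_apply, w,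
      Complex.star_def, mul_comm]
  have h1 : ∀ j : Fin r, (Finset.univ.filter fun k : Fin n => M k *ᵥ w j ≠ 0).card ≤ d := by
    intro j
    rw [← Fintype.card_coe]
    apply aux_orth_card (fun k : (Finset.univ.filter fun k : Fin n => M k *ᵥ w j ≠ 0) =>
      M (k : Fin n) *ᵥ w j)
    · intro k
      exact (Finset.mem_filter.mp k.2).2
    · intro a b hab
      exact horth' j b a (fun he => hab (Subtype.ext he.symm))
  have h2 : ∀ k : Fin n, M k ≠ 0 →
      (Finset.univ.filter fun j : Fin r => M k *ᵥ w j = 0).card ≤ d - (M k).rank := by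
    intro k hk
    exact aux_ker hrd w hgen (M k) hk _ (fun j hj => (Finset.mem_filter.mp hj).2)
  have h3 : ∀ k : Fin n, (M k).rank ≤ d := fun k => by
    simpa using (M k).rank_le_card_height
  set K : Finset (Fin n) := Finset.univ.filter (fun k => M k ≠ 0) with hK
  have hdouble : ∑ k : Fin n, (Finset.univ.filter fun j : Fin r => M k *ᵥ w j ≠ 0).card
      ≤ r * d := by
    have hswap : ∑ k : Fin n, (Finset.univ.filter fun j : Fin r => M k *ᵥ w j ≠ 0).card
        = ∑ j : Fin r, (Finset.univ.filter fun k : Fin n => M k *ᵥ w j ≠ 0).card := by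
      simp only [Finset.card_filter]
      rw [Finset.sum_comm]
    rw [hswap]
    calc ∑ j : Fin r, (Finset.univ.filter fun k : Fin n => M k *ᵥ w j ≠ 0).card
        ≤ ∑ _j : Fin r, d := Finset.sum_le_sum (fun j _ => h1 j)
      _ = r * d := by simp [Finset.sum_const, Finset.card_univ]
  have hper : ∀ k ∈ K, r + (M k).rank
      ≤ (Finset.univ.filter fun j : Fin r => M k *ᵥ w j ≠ 0).card + d := by
    intro k hk
    have hk' : M k ≠ 0 := (Finset.mem_filter.mp hk).2
    have hcards := Finset.card_filter_add_card_filter_not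
      (s := (Finset.univ : Finset (Fin r))) (p := fun j => M k *ᵥ w j = 0)
    simp only [Finset.card_univ, Fintype.card_fin, not_not] at hcards
    have h2' := h2 k hk'
    have h3' := h3 k
    have hcards' : (Finset.univ.filter fun j : Fin r => M k *ᵥ w j = 0).card
        + (Finset.univ.filter fun j : Fin r => M k *ᵥ w j ≠ 0).card = r := by
      simpa using hcards
    omega
  have hsumK : K.card * r + ∑ k ∈ K, (M k).rank
      ≤ (∑ k ∈ K, (Finset.univ.filter fun j : Fin r => M k *ᵥ w j ≠ 0).card) + K.card * d := by
    have := Finset.sum_le_sum hper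
    simpa [Finset.sum_add_distrib, Finset.sum_const, smul_eq_mul, mul_comm] using this
  have hsub : ∑ k ∈ K, (Finset.univ.filter fun j : Fin r => M k *ᵥ w j ≠ 0).card ≤ r * d :=
    le_trans (Finset.sum_le_sum_of_subset (Finset.filter_subset _ _)) hdouble
  have htot : ∑ k : Fin n, (M k).rank = ∑ k ∈ K, (M k).rank := by
    refine (Finset.sum_filter_of_ne ?_).symm
    intro k _ hr h0
    exact hr (by rw [h0, Matrix.rank_zero])
  have hA : ∑ k ∈ K, (M k).rank ≤ K.card * d := by
    calc ∑ k ∈ K, (M k).rank ≤ ∑ _k ∈ K, d := Finset.sum_le_sum (fun k _ => h3 k)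
      _ = K.card * d := by simp [Finset.sum_const, smul_eq_mul]
  rw [htot, pow_two]
  rcases le_total K.card d with hc | hc
  · exact le_trans hA (Nat.mul_le_mul_right d hc)
  · have harith : r * d + K.card * d ≤ d * d + K.card * r := by
      zify
      nlinarith [mul_nonneg (sub_nonneg.mpr (show (d:ℤ) ≤ K.card by exact_mod_cast hc))
        (sub_nonneg.mpr (show (d:ℤ) ≤ r by exact_mod_cast hrd))]
    linarith [hsumK, hsub, harith]
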